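/- In a time-dependent network on a finite vertex set, for all vertices s, u, d and every time t, A_{(s,d)}(t) ≤ A_{(u,d)}(A_{(s,u)}(t)). Moreover, for every t there exists a walk P from s to d with no repeated vertices such that A_P(t) = A_{(s,d)}(t) and, for every vertex u occurring on P, A_{(s,d)}(t) = A_{(u,d)}(A_{(s,u)}(t)). -/

import Mathlib

open scoped ENNReal

/-- Arrival function of a walk: starting at `u` and then visiting the vertices of `l` in
order, departing at time `t`. -/
def walkArr {V : Type*} (A : V → V → ℝ≥0∞ → ℝ≥0∞) : V → List V → ℝ≥0∞ → ℝ≥0∞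
  | _, [], t => t
  | u, v :: l, t => walkArr A v l (A u v t)

/-- `l` (together with start vertex `s`) encodes a walk from `s` to `d`: the walk is the
nonempty vertex sequence `s :: l`, whose last vertex must be `d`. -/
def IsWalkTo {V : Type*} (s d : V) (l : List V) : Prop :=
  (s :: l).getLast (List.cons_ne_nil _ _) = d

/-- The end-to-end arrival function: infimum over all walks from `s` to `d`. -/
noncomputable def endToEnd {V : Type*} (A : V → V → ℝ≥0∞ → ℝ≥0∞) (s d : V) (t : ℝ≥0∞) :
    ℝ≥0∞ :=
  ⨅ l : {l : List V // IsWalkTo s d l}, walkArr A s l.1 t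

/-- The FIFO conditions on a time-dependent network: each edge arrival function is
monotone and arrival is not before departure. -/
def FIFO {V : Type*} (A : V → V → ℝ≥0∞ → ℝ≥0∞) : Prop :=
  ∀ u v : V, Monotone (A u v) ∧ ∀ t, t ≤ A u v t

section Aux
variable {V : Type*} {A : V → V → ℝ≥0∞ → ℝ≥0∞}

lemma walkArr_mono (hA : FIFO A) (s : V) (l : List V) : Monotone (walkArr A s l) := by
  induction l generalizing s with
  | nil => exact fun a b h => h
  | cons v l ih => exact fun a b h => ih v ((hA s v).1 h)

lemma le_walkArr (hA : FIFO A) (s : V) (l : List V) (t : ℝ≥0∞) : t ≤ walkArr A s l t := by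
  induction l generalizing s t with
  | nil => exact le_rfl
  | cons v l ih => exact le_trans ((hA s v).2 t) (ih v _)

lemma walkArr_append (s : V) (l₁ l₂ : List V) (t : ℝ≥0∞) :
    walkArr A s (l₁ ++ l₂) t
      = walkArr A ((s :: l₁).getLast (List.cons_ne_nil _ _)) l₂ (walkArr A s l₁ t) := by
  induction l₁ generalizing s t with
  | nil => simp [walkArr]
  | cons v l₁ ih =>
    simp only [List.cons_append, walkArr, List.getLast_cons_cons]
    exact ih v (A s v t)

lemma getLast_cons_eq_of_ne_nil (s : V) {l : List V} (h : l ≠ []) :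
    (s :: l).getLast (List.cons_ne_nil _ _) = l.getLast h := List.getLast_cons h

lemma getLast_middle (s u : V) (l₁ l₂ : List V) :
    (s :: (l₁ ++ u :: l₂)).getLast (List.cons_ne_nil _ _)
      = (u :: l₂).getLast (List.cons_ne_nil _ _) := by
  rw [List.getLast_cons (by simp), List.getLast_append_of_ne_nil _ (List.cons_ne_nil _ _)]

lemma shorten (hA : FIFO A) : ∀ (n : ℕ) (s : V) (l : List V), l.length ≤ n →
    ∃ l' : List V, l' ⊆ l ∧ (s :: l').Nodup ∧
      (s :: l').getLast (List.cons_ne_nil _ _) = (s :: l).getLast (List.cons_ne_nil _ _) ∧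
      ∀ t, walkArr A s l' t ≤ walkArr A s l t := by
  intro n
  induction n with
  | zero =>
    intro s l hl
    rw [Nat.le_zero, List.length_eq_zero_iff] at hl
    subst hl
    exact ⟨[], by simp, by simp, rfl, fun t => le_rfl⟩
  | succ n ih =>
    intro s l hl
    by_cases hs : s ∈ l
    · obtain ⟨l₁, l₂, rfl⟩ := List.append_of_mem hs
      have hlen : l₂.length ≤ n := by
        simp only [List.length_append, List.length_cons] at hl; omega
      obtain ⟨l', hsub, hnd, hlast, hle⟩ := ih s l₂ hlen
      refine ⟨l', fun x hx => by simp [hsub hx], hnd, ?_, ?_⟩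
      · rw [hlast, getLast_middle]
      · intro t
        have hrw : l₁ ++ s :: l₂ = (l₁ ++ [s]) ++ l₂ := by simp
        have key : walkArr A s (l₁ ++ s :: l₂) t
            = walkArr A s l₂ (walkArr A s (l₁ ++ [s]) t) := by
          rw [hrw, walkArr_append]
          congr 1
          have : (l₁ ++ [s] : List V) = l₁ ++ s :: ([] : List V) := by simp
          rw [this, getLast_middle]; simp
        rw [key]
        exact le_trans (hle t)
          (walkArr_mono hA s l₂ (le_walkArr hA s (l₁ ++ [s]) t))
    · cases l with
      | nil => exact ⟨[], by simp, by simp, rfl, fun t => le_rfl⟩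
      | cons v l₃ =>
        have hlen : l₃.length ≤ n := by simp at hl; omega
        obtain ⟨l', hsub, hnd, hlast, hle⟩ := ih v l₃ hlen
        simp only [List.mem_cons, not_or] at hs
        refine ⟨v :: l', List.Subset.trans (List.cons_subset_cons v hsub) ?_, ?_, ?_, ?_⟩
        · exact fun x hx => hx
        · refine List.nodup_cons.2 ⟨?_, hnd⟩
          simp only [List.mem_cons, not_or]
          exact ⟨hs.1, fun h => hs.2 (hsub h)⟩
        · rw [List.getLast_cons_cons, List.getLast_cons_cons, hlast]
        · intro t
          simp only [walkArr]
          exact hle _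

lemma endToEnd_le_walkArr {s d : V} {l : List V} (h : IsWalkTo s d l) (t : ℝ≥0∞) :
    endToEnd A s d t ≤ walkArr A s l t :=
  iInf_le (fun l : {l : List V // IsWalkTo s d l} => walkArr A s l.1 t) ⟨l, h⟩

lemma endToEnd_mono (hA : FIFO A) (s d : V) : Monotone (endToEnd A s d) :=
  fun a b h => le_iInf fun l => (iInf_le _ l).trans (walkArr_mono hA s l.1 h)

lemma le_endToEnd (hA : FIFO A) (s d : V) (t : ℝ≥0∞) : t ≤ endToEnd A s d t :=
  le_iInf fun l => le_walkArr hA s l.1 t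

lemma isWalkTo_append {s u d : V} {l₁ l₂ : List V} (h₁ : IsWalkTo s u l₁)
    (h₂ : IsWalkTo u d l₂) : IsWalkTo s d (l₁ ++ l₂) := by
  unfold IsWalkTo at *
  cases l₂ with
  | nil => simpa using h₁.trans h₂
  | cons v l₂ =>
    rw [List.getLast_cons_cons] at h₂
    rw [← h₂]
    cases l₁ with
    | nil => simp [List.getLast_cons_cons]
    | cons w l₁ => exact getLast_middle s v (w :: l₁) l₂

lemma exists_min (hA : FIFO A) [Fintype V] (s d : V) (t : ℝ≥0∞) :
    ∃ l : List V, IsWalkTo s d l ∧ (s :: l).Nodup ∧ walkArr A s l t = endToEnd A s d t := by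
  classical
  set S : Set (List V) := {l | IsWalkTo s d l ∧ (s :: l).Nodup} with hS
  have hfin : S.Finite := by
    apply (List.finite_length_le V (Fintype.card V)).subset
    intro l hl
    have := hl.2.length_le_card
    simp only [List.length_cons] at this
    simpa using Nat.le_of_succ_le this
  have hne : S.Nonempty := by
    obtain ⟨l', _, hnd, hlast, _⟩ := shorten hA [d].length s [d] le_rfl
    exact ⟨l', by
      refine ⟨?_, hnd⟩
      unfold IsWalkTo
      rw [hlast]; simp⟩
  obtain ⟨l₀, hl₀, hmin⟩ := Set.exists_min_image S (fun l => walkArr A s l t) hfin hne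
  refine ⟨l₀, hl₀.1, hl₀.2, le_antisymm ?_ (endToEnd_le_walkArr hl₀.1 t)⟩
  refine le_iInf fun ⟨l, hl⟩ => ?_
  obtain ⟨l', _, hnd, hlast, hle⟩ := shorten hA l.length s l le_rfl
  have hl' : IsWalkTo s d l' := by unfold IsWalkTo at *; rw [hlast]; exact hl
  exact le_trans (hmin l' ⟨hl', hnd⟩) (hle t)

lemma triangle (hA : FIFO A) [Fintype V] (s d u : V) (t : ℝ≥0∞) :
    endToEnd A s d t ≤ endToEnd A u d (endToEnd A s u t) := by
  obtain ⟨l₁, hw₁, _, heq⟩ := exists_min hA s u t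
  rw [← heq]
  refine le_iInf fun ⟨l₂, hl₂⟩ => ?_
  have : walkArr A u l₂ (walkArr A s l₁ t) = walkArr A s (l₁ ++ l₂) t := by
    rw [walkArr_append, hw₁]
  rw [this]
  exact endToEnd_le_walkArr (isWalkTo_append hw₁ hl₂) t

end Aux

/-- The end-to-end arrival function satisfies the triangle inequality
`A_{(s,d)}(t) ≤ A_{(u,d)}(A_{(s,u)}(t))`; moreover for each departure time `t` there is a
walk `P` from `s` to `d` with no repeated vertices attaining `A_{(s,d)}(t)` such that
equality holds at every vertex `u` of `P`. -/
theorem endToEnd_triangle_and_attained {V : Type*} [Fintype V]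
    (A : V → V → ℝ≥0∞ → ℝ≥0∞) (hA : FIFO A) (s d : V) (t : ℝ≥0∞) :
    (∀ u : V, endToEnd A s d t ≤ endToEnd A u d (endToEnd A s u t)) ∧
    ∃ l : List V, IsWalkTo s d l ∧ (s :: l).Nodup ∧
      walkArr A s l t = endToEnd A s d t ∧
      ∀ u ∈ s :: l, endToEnd A s d t = endToEnd A u d (endToEnd A s u t) := by
  refine ⟨fun u => triangle hA s d u t, ?_⟩
  obtain ⟨l₀, hw, hnd, heq⟩ := exists_min hA s d t
  refine ⟨l₀, hw, hnd, heq, fun u hu => ?_⟩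
  refine le_antisymm (triangle hA s d u t) ?_
  obtain ⟨la, lb, hsplit⟩ := List.append_of_mem hu
  cases la with
  | nil =>
    simp only [List.nil_append, List.cons.injEq] at hsplit
    obtain ⟨rfl, rfl⟩ := hsplit
    have hss : endToEnd A s s t = t :=
      le_antisymm (endToEnd_le_walkArr (show IsWalkTo s s [] from rfl) t)
        (le_endToEnd hA s s t)
    rw [hss]
  | cons w la' =>
    simp only [List.cons_append, List.cons.injEq] at hsplit
    obtain ⟨rfl, rfl⟩ := hsplit
    have hP1 : IsWalkTo s u (la' ++ [u]) := by
      show (s :: (la' ++ [u])).getLast _ = u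
      have : (la' ++ [u] : List V) = la' ++ u :: ([] : List V) := by simp
      rw [this, getLast_middle]
      simp
    have hlb : IsWalkTo u d lb := by
      unfold IsWalkTo at hw ⊢
      rw [← hw, getLast_middle]
    have hdecomp : walkArr A s (la' ++ u :: lb) t
        = walkArr A u lb (walkArr A s (la' ++ [u]) t) := by
      have : la' ++ u :: lb = (la' ++ [u]) ++ lb := by simp
      rw [this, walkArr_append, hP1]
    calc endToEnd A u d (endToEnd A s u t)
        ≤ endToEnd A u d (walkArr A s (la' ++ [u]) t) :=
          endToEnd_mono hA u d (endToEnd_le_walkArr hP1 t)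
      _ ≤ walkArr A u lb (walkArr A s (la' ++ [u]) t) := endToEnd_le_walkArr hlb _
      _ = walkArr A s (la' ++ u :: lb) t := hdecomp.symm
      _ = endToEnd A s d t := heq
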